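/- The number of signed permutations (ω,ε) of [n] all of whose right-to-left maxima are unbarred equals 1·3·5⋯(2n−1) = (2n)!/(2^n n!). -/

import Mathlib

open Finset Equiv

namespace SignedRtl

variable {n : ℕ}

/-- right-to-left maximum position -/
def Rtl (σ : Perm (Fin m)) (i : Fin m) : Prop := ∀ j, i < j → σ j < σ i

/-- insert value 0 at position k, shifting other values up -/
def ins (k : Fin (n + 1)) (σ : Perm (Fin n)) : Perm (Fin (n + 1)) :=
  (finSuccEquiv' k).trans ((σ.optionCongr).trans (finSuccEquiv n).symm)

@[simp] lemma ins_self (k : Fin (n + 1)) (σ : Perm (Fin n)) : ins k σ k = 0 := by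
  simp [ins, finSuccEquiv]

@[simp] lemma ins_succAbove (k : Fin (n + 1)) (σ : Perm (Fin n)) (i : Fin n) :
    ins k σ (k.succAbove i) = (σ i).succ := by
  simp [ins, finSuccEquiv]

lemma rtl_ins_succAbove {k : Fin (n + 1)} {σ : Perm (Fin n)} {i : Fin n} :
    Rtl (ins k σ) (k.succAbove i) ↔ Rtl σ i := by
  constructor
  · intro h j hij
    have := h (k.succAbove j) (Fin.succAbove_lt_succAbove_iff.mpr hij)
    simpa [Fin.succ_lt_succ_iff] using this
  · intro h j' hj'
    rcases eq_or_ne j' k with rfl | hne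
    · simpa using Fin.succ_pos (σ i)
    · obtain ⟨j, rfl⟩ := Fin.exists_succAbove_eq hne
      have hij : i < j := Fin.succAbove_lt_succAbove_iff.mp hj'
      simpa [Fin.succ_lt_succ_iff] using h j hij

lemma rtl_ins_self {k : Fin (n + 1)} {σ : Perm (Fin n)} :
    Rtl (ins k σ) k ↔ k = Fin.last n := by
  constructor
  · intro h
    by_contra hne
    have hk : k < Fin.last n := Fin.lt_last_iff_ne_last.mpr hne
    obtain ⟨j, hj⟩ := Fin.exists_succAbove_eq (Ne.symm hne)
    have := h (Fin.last n) hk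
    rw [← hj, ins_succAbove, ins_self] at this
    exact absurd this (Fin.not_lt_zero _)
  · rintro rfl j hj
    exact absurd hj (Fin.not_lt.mpr (Fin.le_last j))

/-- delete value 0 (at position τ⁻¹ 0) -/
def del (τ : Perm (Fin (n + 1))) : Perm (Fin n) :=
  Equiv.removeNone ((finSuccEquiv' (τ⁻¹ 0)).symm.trans (τ.trans (finSuccEquiv n)))

lemma del_succ (τ : Perm (Fin (n + 1))) (i : Fin n) :
    τ ((τ⁻¹ 0).succAbove i) = (del τ i).succ := by
  set e := (finSuccEquiv' (τ⁻¹ 0)).symm.trans (τ.trans (finSuccEquiv n)) with he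
  have hne : τ ((τ⁻¹ 0).succAbove i) ≠ 0 := by
    intro h
    have := τ.injective (h.trans (Equiv.apply_symm_apply τ 0).symm)
    exact Fin.succAbove_ne _ i this
  have hsome : ∃ x', e (some i) = some x' := by
    rcases h : e (some i) with _ | x'
    · exfalso
      have : finSuccEquiv n (τ ((τ⁻¹ 0).succAbove i)) = none := by
        simpa [he, Equiv.trans_apply] using h
      apply hne
      have := congrArg (finSuccEquiv n).symm this
      simpa [finSuccEquiv] using this
    · exact ⟨x', rfl⟩
  have h2 := Equiv.removeNone_some _ hsome
  have h3 : e (some i) = finSuccEquiv n (τ ((τ⁻¹ 0).succAbove i)) := by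
    simp [he, Equiv.trans_apply]
  rw [h3] at h2
  have := congrArg (finSuccEquiv n).symm h2
  rw [show del τ i = e.removeNone i from rfl]
  simpa [finSuccEquiv] using this.symm

lemma ins_del (τ : Perm (Fin (n + 1))) : ins (τ⁻¹ 0) (del τ) = τ := by
  ext x
  rcases eq_or_ne x (τ⁻¹ 0) with rfl | hne
  · simp
  · obtain ⟨i, rfl⟩ := Fin.exists_succAbove_eq hne
    rw [ins_succAbove, ← del_succ]

end SignedRtl

open SignedRtl in
lemma signed_key (n : ℕ) :
    ((Finset.univ : Finset (Equiv.Perm (Fin (n+1)) × (Fin (n+1) → ℤˣ))).filter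
        (fun p => ∀ i, (∀ j, i < j → p.1 j < p.1 i) → p.2 i = 1)).card
      = (2 * n + 1) *
      ((Finset.univ : Finset (Equiv.Perm (Fin n) × (Fin n → ℤˣ))).filter
        (fun p => ∀ i, (∀ j, i < j → p.1 j < p.1 i) → p.2 i = 1)).card := by
  classical
  set T : Finset (Fin (n+1) × ℤˣ) :=
    Finset.univ.filter (fun x => x.1 = Fin.last n → x.2 = 1) with hT
  set S : Finset (Equiv.Perm (Fin n) × (Fin n → ℤˣ)) :=
    Finset.univ.filter (fun p => ∀ i, (∀ j, i < j → p.1 j < p.1 i) → p.2 i = 1) with hS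
  have hTcard : T.card = 2 * n + 1 := by
    have h1 : Tᶜ = {((Fin.last n : Fin (n+1)), (-1 : ℤˣ))} := by
      ext ⟨a, u⟩
      simp only [hT, Finset.mem_compl, Finset.mem_filter, Finset.mem_univ, true_and,
        Finset.mem_singleton, Prod.mk.injEq, not_forall]
      constructor
      · rintro ⟨h1, h2⟩
        exact ⟨h1, (Int.units_eq_one_or u).resolve_left h2⟩
      · rintro ⟨rfl, rfl⟩; exact ⟨rfl, by decide⟩
    have h2 := Finset.card_compl_add_card T
    rw [h1] at h2
    simp only [Finset.card_singleton] at h2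
    have h3 : Fintype.card (Fin (n+1) × ℤˣ) = 2 * n + 2 := by
      simp [Fintype.card_prod]; ring
    omega
  have := Finset.card_bij'
    (s := T ×ˢ S)
    (t := (Finset.univ : Finset (Equiv.Perm (Fin (n+1)) × (Fin (n+1) → ℤˣ))).filter
        (fun p => ∀ i, (∀ j, i < j → p.1 j < p.1 i) → p.2 i = 1))
    (i := fun a _ => (ins a.1.1 a.2.1, a.1.1.insertNth a.1.2 a.2.2))
    (j := fun b _ => ((b.1⁻¹ 0, b.2 (b.1⁻¹ 0)), (del b.1, fun i => b.2 ((b.1⁻¹ 0).succAbove i))))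
    (fun a ha => by
      obtain ⟨⟨k, s⟩, σ, ε⟩ := a
      simp only [Finset.mem_product, hT, hS, Finset.mem_filter, Finset.mem_univ, true_and] at ha
      obtain ⟨h1, h2⟩ := ha
      simp only [Finset.mem_filter, Finset.mem_univ, true_and]
      intro i hrtl
      rcases eq_or_ne i k with rfl | hne
      · rw [Fin.insertNth_apply_same]
        exact h1 (rtl_ins_self.mp hrtl)
      · obtain ⟨j, rfl⟩ := Fin.exists_succAbove_eq hne
        rw [Fin.insertNth_apply_succAbove]
        exact h2 j (rtl_ins_succAbove.mp hrtl))
    (fun b hb => by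
      obtain ⟨τ, ε⟩ := b
      simp only [Finset.mem_filter, Finset.mem_univ, true_and] at hb
      simp only [Finset.mem_product, hT, hS, Finset.mem_filter, Finset.mem_univ, true_and]
      constructor
      · intro h
        apply hb
        intro j hj
        rw [h] at hj
        exact absurd hj (Fin.not_lt.mpr (Fin.le_last j))
      · intro i hrtl
        apply hb
        have : Rtl (ins (τ⁻¹ 0) (del τ)) ((τ⁻¹ 0).succAbove i) :=
          rtl_ins_succAbove.mpr hrtl
        rwa [ins_del] at this)
    (fun a ha => by
      obtain ⟨⟨k, s⟩, σ, ε⟩ := a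
      have hk : (ins k σ)⁻¹ 0 = k := by
        rw [Equiv.Perm.inv_eq_iff_eq]
        exact (ins_self k σ).symm
      have hτ : ins ((ins k σ)⁻¹ 0) (del (ins k σ)) = ins k σ := ins_del _
      rw [hk] at hτ
      have hσ : del (ins k σ) = σ := by
        ext i
        have h1 : ins k (del (ins k σ)) (k.succAbove i) = ins k σ (k.succAbove i) := by
          rw [hτ]
        rw [ins_succAbove, ins_succAbove] at h1
        exact congrArg Fin.val (Fin.succ_injective _ h1)
      simp only [Prod.mk.injEq]
      exact ⟨⟨hk, by rw [hk, Fin.insertNth_apply_same]⟩,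
        hσ, by funext i; rw [hk, Fin.insertNth_apply_succAbove]⟩)
    (fun b hb => by
      obtain ⟨τ, ε⟩ := b
      simp only [Prod.mk.injEq]
      refine ⟨ins_del τ, ?_⟩
      funext x
      rcases eq_or_ne x (τ⁻¹ 0) with rfl | hne
      · rw [Fin.insertNth_apply_same]
      · obtain ⟨i, rfl⟩ := Fin.exists_succAbove_eq hne
        rw [Fin.insertNth_apply_succAbove])
  rw [← this, Finset.card_product, hTcard]

theorem card_signed_perms_rtl_max_unbarred (n : ℕ) :
    ((Finset.univ : Finset (Equiv.Perm (Fin n) × (Fin n → ℤˣ))).filter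
        (fun p => ∀ i : Fin n, (∀ j : Fin n, i < j → p.1 j < p.1 i) → p.2 i = 1)).card
      = ∏ k ∈ Finset.range n, (2 * k + 1) ∧
    ((Finset.univ : Finset (Equiv.Perm (Fin n) × (Fin n → ℤˣ))).filter
        (fun p => ∀ i : Fin n, (∀ j : Fin n, i < j → p.1 j < p.1 i) → p.2 i = 1)).card
        * (2 ^ n * n.factorial) = (2 * n).factorial := by
  have main : ∀ m : ℕ,
      ((Finset.univ : Finset (Equiv.Perm (Fin m) × (Fin m → ℤˣ))).filter
        (fun p => ∀ i : Fin m, (∀ j : Fin m, i < j → p.1 j < p.1 i) → p.2 i = 1)).card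
      = ∏ k ∈ Finset.range m, (2 * k + 1) := by
    intro m
    induction m with
    | zero =>
      rw [Finset.prod_range_zero]
      rw [Finset.filter_true_of_mem (fun p _ => by intro i; exact absurd i.2 (by omega))]
      simp
    | succ m ih =>
      rw [signed_key, ih, Finset.prod_range_succ]
      ring
  refine ⟨main n, ?_⟩
  rw [main n]
  clear main
  induction n with
  | zero => simp
  | succ m ih =>
    rw [Finset.prod_range_succ]
    have h1 : 2 * (m + 1) = (2 * m + 1) + 1 := by ring
    rw [h1, Nat.factorial_succ, Nat.factorial_succ, Nat.factorial_succ, pow_succ, ← ih]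
    ring
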